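/- (Eigenvalue attraction) Let M(t) be a smoothly varying real n×n matrix with a simple non-real eigenvalue λ(t) having right eigenvector v(t) (normalized) and left eigenvector u(t)* with u* v = 1. Then the force exerted by the complex conjugate eigenvalue λ̄ on λ in the second-derivative formula, namely 2·(u* Ṁ v̄̃)(ũ* Ṁ v)/(λ − λ̄) where ṽ = v̄ and ũ = ū are the eigenvectors of λ̄, equals −i·|uᵀ Ṁ v|²/Im(λ); hence it is directed toward the real axis (downward if Im λ > 0, upward if Im λ < 0), with magnitude inversely proportional to the distance 2|Im λ| between λ and λ̄. -/

import Mathlib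

open Matrix Complex

/-- Eigenvalue attraction: Let `M(t)` be a smoothly varying real matrix with a
simple non-real eigenvalue `λ` at time `t`, with normalized right eigenvector `v` and left
eigenvector `u` satisfying `u* v = 1`. Then the force exerted by `conj λ` on `λ`, namely
`2·(u* Ṁ v̄)(uᵀ Ṁ v)/(λ − conj λ)` (the eigenvectors of `conj λ` being the entrywise
conjugates `v̄, ū`), equals `−i·|uᵀ Ṁ v|²/Im(λ)`; it points toward the real axis. -/
theorem eigenvalue_attraction {n : ℕ} (M : ℝ → Matrix (Fin n) (Fin n) ℝ)
    (Mdot : Matrix (Fin n) (Fin n) ℝ) (t : ℝ)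
    (hM : ∀ i j, HasDerivAt (fun s => M s i j) (Mdot i j) t)
    (lam : ℂ) (u v : Fin n → ℂ) (him : lam.im ≠ 0)
    (hnorm : ∑ a, ‖v a‖ ^ 2 = 1)
    (hright : ((M t).map (fun x : ℝ => (x : ℂ))).mulVec v = lam • v)
    (hleft : Matrix.vecMul (star u) ((M t).map (fun x : ℝ => (x : ℂ))) = lam • (star u))
    (hduality : star u ⬝ᵥ v = 1)
    (hne : u ⬝ᵥ (Mdot.map (fun x : ℝ => (x : ℂ))).mulVec v ≠ 0) :
    2 * ((star u ⬝ᵥ (Mdot.map (fun x : ℝ => (x : ℂ))).mulVec (star v)) *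
          (u ⬝ᵥ (Mdot.map (fun x : ℝ => (x : ℂ))).mulVec v)) /
        (lam - (starRingEnd ℂ) lam) =
      -Complex.I *
        (((‖u ⬝ᵥ (Mdot.map (fun x : ℝ => (x : ℂ))).mulVec v‖) ^ 2 / lam.im : ℝ) : ℂ) ∧
    (0 < lam.im →
      (2 * ((star u ⬝ᵥ (Mdot.map (fun x : ℝ => (x : ℂ))).mulVec (star v)) *
            (u ⬝ᵥ (Mdot.map (fun x : ℝ => (x : ℂ))).mulVec v)) /
          (lam - (starRingEnd ℂ) lam)).im < 0) ∧
    (lam.im < 0 →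
      0 < (2 * ((star u ⬝ᵥ (Mdot.map (fun x : ℝ => (x : ℂ))).mulVec (star v)) *
            (u ⬝ᵥ (Mdot.map (fun x : ℝ => (x : ℂ))).mulVec v)) /
          (lam - (starRingEnd ℂ) lam)).im) := by
  set A := (Mdot.map (fun x : ℝ => (x : ℂ))) with hA
  set z := u ⬝ᵥ A.mulVec v with hz
  have hconj : star u ⬝ᵥ A.mulVec (star v) = (starRingEnd ℂ) z := by
    simp only [hz, hA, dotProduct, Matrix.mulVec, dotProduct, map_sum, Finset.mul_sum,
      _root_.map_mul, Pi.star_apply, RCLike.star_def, Matrix.map_apply, Complex.conj_ofReal]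
  have hzz : (starRingEnd ℂ) z * z = ((‖z‖ ^ 2 : ℝ) : ℂ) := by
    rw [Complex.conj_mul']
    push_cast
    rfl
  have hlam : lam - (starRingEnd ℂ) lam = (2 * lam.im : ℝ) * Complex.I := by
    apply Complex.ext <;> simp [Complex.sub_im, Complex.sub_re] <;> ring
  have him' : ((lam.im : ℂ)) ≠ 0 := by exact_mod_cast him
  have key : 2 * ((star u ⬝ᵥ A.mulVec (star v)) * z) / (lam - (starRingEnd ℂ) lam)
      = -Complex.I * (((‖z‖) ^ 2 / lam.im : ℝ) : ℂ) := by
    rw [hconj, hzz, hlam]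
    push_cast
    field_simp
    ring_nf
    rw [Complex.I_sq]
    ring
  refine ⟨key, ?_, ?_⟩
  all_goals intro h
  all_goals rw [key]
  all_goals have habs : ‖z‖ ≠ 0 := by simpa using hne
  all_goals have hzpos : 0 < ‖z‖ ^ 2 := by positivity
  · have : 0 < ‖z‖ ^ 2 / lam.im := div_pos hzpos h
    simpa [← Complex.ofReal_pow] using this
  · have : ‖z‖ ^ 2 / lam.im < 0 := div_neg_of_pos_of_neg hzpos h
    simpa [← Complex.ofReal_pow] using this
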